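/- arXiv:0901.4129 — 2 statements merged into one kernel-verified Lean document; each statement's English description precedes it below -/
import Mathlib

section
/- Let C be a quasi-cyclic code defined by a J×L polynomial parity-check matrix H(x) over F_2[x]/(x^r−1), with J+1 ≤ L. If there exists a subset S ⊆ {0,...,L-1} of size J+1 such that Σ_{i∈S} wt(perm(H_{S\{i}}(x))) > 0, then the minimum Hamming distance of C satisfies d_min(C) ≤ Σ_{i∈S} wt(perm(H_{S\{i}}(x))). -/
open Matrix BigOperators

noncomputable section

/-- The ring `F₂[x]/(xʳ−1)`, realized as the group algebra of `ℤ/rℤ` over `F₂`.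
    (For `r > 0` this is isomorphic to `F₂[x]/(xʳ−1)`, and the canonical representative
    of degree `< r` corresponds to the `Finsupp` on `ZMod r`.) -/
abbrev Rr (r : ℕ) : Type := AddMonoidAlgebra (ZMod 2) (ZMod r)

/-- The monomial `xᵃ`. -/
def mono {r : ℕ} (a : ZMod r) : Rr r := AddMonoidAlgebra.single a 1

/-- Weight of an element of `Rr r`: the number of nonzero coefficients. -/
def wt {r : ℕ} (p : Rr r) : ℕ := p.coeff.support.card

/-- Square submatrix of `H` given by the columns in `T`. -/
def colSub {J L : ℕ} {R : Type*} (H : Matrix (Fin J) (Fin L) R) (T : Finset (Fin L))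
    (h : T.card = J) : Matrix (Fin J) (Fin J) R :=
  fun j k => H j (T.orderIsoOfFin h k)

/-- Square submatrix of `H` given by the columns in `S \ {i}` where `S` has `J+1` elements. -/
def eraseSub {J L : ℕ} {R : Type*} (H : Matrix (Fin J) (Fin L) R) (S : Finset (Fin L))
    (hS : S.card = J + 1) (i : Fin L) (hi : i ∈ S) : Matrix (Fin J) (Fin J) R :=
  colSub H (S.erase i) (by rw [Finset.card_erase_of_mem hi, hS]; rfl)

def isCodeword {r : ℕ} {ι κ : Type*} [Fintype κ] (H : Matrix ι κ (Rr r)) (c : κ → Rr r) : Prop :=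
  ∀ j, ∑ i, H j i * c i = 0

/-- Hamming weight of a vector over `Rr r`. -/
def wH {r : ℕ} {κ : Type*} [Fintype κ] (c : κ → Rr r) : ℕ := ∑ i, wt (c i)

/-- Minimum Hamming distance of the code with parity-check matrix `H`. -/
def dmin {r : ℕ} {ι κ : Type*} [Fintype κ] (H : Matrix ι κ (Rr r)) : ℕ :=
  sInf {w | ∃ c, isCodeword H c ∧ c ≠ 0 ∧ wH c = w}

/- ## Auxiliary lemmas -/

lemma Rr.two_eq_zero {r : ℕ} : (2 : Rr r) = 0 := by
  have h : (2 : Rr r) = algebraMap (ZMod 2) (Rr r) 2 := (map_ofNat _ 2).symm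
  rw [h, show (2 : ZMod 2) = 0 by decide, map_zero]

lemma Rr.neg_one_eq_one {r : ℕ} : (-1 : Rr r) = 1 := by
  have h : (1 : Rr r) + 1 = 0 := by rw [one_add_one_eq_two, Rr.two_eq_zero]
  linear_combination -h

lemma Rr.permanent_eq_det {r n : ℕ} (M : Matrix (Fin n) (Fin n) (Rr r)) :
    M.permanent = M.det := by
  rw [Matrix.det_apply', Matrix.permanent]
  refine Finset.sum_congr rfl fun σ _ => ?_
  have hsign : (Equiv.Perm.sign σ : Rr r) = 1 := by
    rcases Int.units_eq_one_or (Equiv.Perm.sign σ) with h | h <;> rw [h]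
    · simp
    · simp [Rr.neg_one_eq_one]
  rw [hsign, one_mul]

lemma orderEmbOfFin_erase {α : Type*} [LinearOrder α] [DecidableEq α] (S : Finset α) {n : ℕ}
    (hS : S.card = n + 1) (k : Fin (n + 1))
    (h' : (S.erase (S.orderEmbOfFin hS k)).card = n) (m : Fin n) :
    (S.erase (S.orderEmbOfFin hS k)).orderEmbOfFin h' m
      = S.orderEmbOfFin hS (k.succAbove m) := by
  have key := Finset.orderEmbOfFin_unique h'
      (f := fun m => S.orderEmbOfFin hS (k.succAbove m)) ?_ ?_
  · exact (congrFun key m).symm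
  · intro m
    refine Finset.mem_erase.2 ⟨fun h => ?_, Finset.orderEmbOfFin_mem _ _ _⟩
    exact Fin.succAbove_ne k m ((S.orderEmbOfFin hS).injective h)
  · exact (S.orderEmbOfFin hS).strictMono.comp (Fin.strictMono_succAbove k)

lemma wt_pos_ne_zero {r : ℕ} {p : Rr r} (h : 0 < wt p) : p ≠ 0 := by
  intro hp
  rw [hp] at h
  simp [wt] at h

/-- minimum distance bound from the polynomial parity-check matrix. -/
theorem dmin_le_sum_wt_permanent {r J L : ℕ} (hr : 0 < r) (hJL : J + 1 ≤ L)
    (H : Matrix (Fin J) (Fin L) (Rr r))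
    (S : Finset (Fin L)) (hS : S.card = J + 1)
    (hpos : 0 < ∑ i ∈ S.attach, wt (eraseSub H S hS i.1 i.2).permanent) :
    dmin H ≤ ∑ i ∈ S.attach, wt (eraseSub H S hS i.1 i.2).permanent := by
  classical
  set σ := S.orderEmbOfFin hS with hσ
  set c : Fin L → Rr r :=
    fun i => if h : i ∈ S then (eraseSub H S hS i h).permanent else 0 with hc
  -- the image of `σ` is `S`
  have himg : Finset.univ.map σ.toEmbedding = S := by
    apply Finset.eq_of_subset_of_card_le
    · intro x hx
      obtain ⟨k, -, rfl⟩ := Finset.mem_map.1 hx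
      exact Finset.orderEmbOfFin_mem _ _ _
    · simp [hS]
  -- the erased submatrices, reindexed along `σ`
  have herase : ∀ (k : Fin (J + 1)) (j m : Fin J),
      eraseSub H S hS (σ k) (Finset.orderEmbOfFin_mem _ _ _) j m
        = H j (σ (k.succAbove m)) := by
    intro k j m
    show H j _ = _
    rw [Finset.coe_orderIsoOfFin_apply]
    exact congrArg (H j) (orderEmbOfFin_erase S hS k _ m)
  -- c is a codeword
  have hccode : isCodeword H c := by
    intro j
    have hsum : ∑ i, H j i * c i = ∑ i ∈ S, H j i * c i := by
      refine (Finset.sum_subset (Finset.subset_univ S) ?_).symm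
      intro x _ hx
      simp [hc, hx]
    rw [hsum, ← himg, Finset.sum_map]
    -- the auxiliary (J+1)×(J+1) matrix with a repeated row
    set M : Matrix (Fin (J + 1)) (Fin (J + 1)) (Rr r) :=
      Fin.cons (fun k => H j (σ k)) (fun m k => H m (σ k)) with hM
    have hsub : ∀ k : Fin (J + 1),
        M.submatrix Fin.succ k.succAbove
          = eraseSub H S hS (σ k) (Finset.orderEmbOfFin_mem _ _ _) := by
      intro k
      ext a b
      rw [Matrix.submatrix_apply, herase k a b, hM, Fin.cons_succ]
    have hdet : M.det = 0 := by
      refine Matrix.det_zero_of_row_eq (i := (0 : Fin (J + 1))) (j := Fin.succ j)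
        (Fin.succ_ne_zero j).symm ?_
      ext k
      rw [hM, Fin.cons_succ]
      rfl
    calc ∑ k : Fin (J + 1), H j (σ.toEmbedding k) * c (σ.toEmbedding k)
        = ∑ k : Fin (J + 1), (-1 : Rr r) ^ (k : ℕ) * M 0 k
            * (M.submatrix Fin.succ k.succAbove).det := by
          refine Finset.sum_congr rfl fun k _ => ?_
          rw [Rr.neg_one_eq_one, one_pow, one_mul, hsub k]
          have hck : c (σ k) = (eraseSub H S hS (σ k)
              (Finset.orderEmbOfFin_mem _ _ _)).permanent := by
            rw [hc]
            exact dif_pos _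
          rw [show σ.toEmbedding k = σ k from rfl, hck, Rr.permanent_eq_det, hM,
            Fin.cons_zero]
      _ = M.det := (Matrix.det_succ_row_zero M).symm
      _ = 0 := hdet
  -- c is nonzero
  obtain ⟨i, hi, hwt⟩ : ∃ i ∈ S.attach, 0 < wt (eraseSub H S hS i.1 i.2).permanent := by
    by_contra hcon
    push_neg at hcon
    simp only [Nat.le_zero] at hcon
    rw [Finset.sum_eq_zero hcon] at hpos
    exact lt_irrefl 0 hpos
  have hcne : c ≠ 0 := by
    intro h0
    have : c i.1 = 0 := congrFun h0 i.1
    rw [hc] at this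
    simp only [dif_pos i.2] at this
    exact wt_pos_ne_zero hwt this
  -- Hamming weight of c
  have hwH : wH c = ∑ i ∈ S.attach, wt (eraseSub H S hS i.1 i.2).permanent := by
    have h1 : wH c = ∑ i ∈ S, wt (c i) := by
      refine (Finset.sum_subset (Finset.subset_univ S) ?_).symm
      intro x _ hx
      simp [hc, hx, wt]
    rw [h1, ← Finset.sum_attach S (fun i => wt (c i))]
    refine Finset.sum_congr rfl fun i _ => ?_
    rw [hc]
    simp only [dif_pos i.2]
  exact Nat.sInf_le ⟨c, hccode, hcne, hwH⟩
end
end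

section
/- Let J ≥ 2 and let C be a type-I quasi-cyclic code with J×L polynomial parity-check matrix H(x) over F_2[x]/(x^r−1) (entries are 0 or monomials), J+1 ≤ L. If the Tanner graph of H(x) contains a 4-cycle, i.e., there exist row indices j1 ≠ j2 and column indices i1 ≠ i2 such that h_{j1,i1}, h_{j1,i2}, h_{j2,i1}, h_{j2,i2} are all monomials and h_{j1,i1}·h_{j2,i2} = h_{j1,i2}·h_{j2,i1} in F_2[x]/(x^r−1), then d_min(C) ≤ (J+1)! − 2(J−1)!. -/
open Matrix BigOperators

noncomputable section

namespace QCAux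
variable {r : ℕ}

lemma Rr_neg (x : Rr r) : -x = x := by
  ext a
  rw [AddMonoidAlgebra.coeff_neg, Finsupp.neg_apply]
  exact CharTwo.neg_eq _

lemma Rr_add_self (x : Rr r) : x + x = 0 := by
  nth_rewrite 1 [← Rr_neg x]
  exact neg_add_cancel x

lemma wt_zero : wt (0 : Rr r) = 0 := by simp [wt]

lemma wt_mono (a : ZMod r) : wt (mono a) = 1 := by
  simp [wt, mono, AddMonoidAlgebra.coeff_single, Finsupp.support_single_ne_zero _ one_ne_zero]

lemma wt_add_le (x y : Rr r) : wt (x + y) ≤ wt x + wt y :=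
  le_trans (Finset.card_le_card (Finsupp.support_add (g₁ := x.coeff) (g₂ := y.coeff))) (Finset.card_union_le _ _)

lemma wt_sum_le {ι : Type*} (s : Finset ι) (f : ι → Rr r) :
    wt (∑ i ∈ s, f i) ≤ ∑ i ∈ s, wt (f i) := by
  classical
  induction s using Finset.cons_induction with
  | empty => simp [wt_zero]
  | cons a s ha ih =>
    rw [Finset.sum_cons, Finset.sum_cons]
    exact le_trans (wt_add_le _ _) (Nat.add_le_add_left ih _)

lemma wt_mul_le (x y : Rr r) : wt (x * y) ≤ wt x * wt y := by
  classical
  exact le_trans (Finset.card_le_card (AddMonoidAlgebra.support_coeff_mul_subset x y))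
    (Finset.card_add_le)

lemma wt_prod_le {ι : Type*} (s : Finset ι) (f : ι → Rr r) :
    wt (∏ i ∈ s, f i) ≤ ∏ i ∈ s, wt (f i) := by
  classical
  induction s using Finset.cons_induction with
  | empty => simp [wt, AddMonoidAlgebra.one_def, AddMonoidAlgebra.coeff_single]
  | cons a s ha ih =>
    rw [Finset.prod_cons, Finset.prod_cons]
    exact le_trans (wt_mul_le _ _) (Nat.mul_le_mul_left _ ih)

lemma wt_prod_le_one {ι : Type*} (s : Finset ι) (f : ι → Rr r)
    (h : ∀ i ∈ s, wt (f i) ≤ 1) : wt (∏ i ∈ s, f i) ≤ 1 :=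
  le_trans (wt_prod_le s f) (Finset.prod_le_one (fun _ _ => Nat.zero_le _) h)

lemma det_char2 {n : ℕ} (M : Matrix (Fin n) (Fin n) (Rr r)) :
    det M = ∑ σ : Equiv.Perm (Fin n), ∏ i, M (σ i) i := by
  rw [Matrix.det_apply]
  refine Finset.sum_congr rfl fun σ _ => ?_
  rcases Int.units_eq_one_or (Equiv.Perm.sign σ) with h | h <;> rw [h]
  · rw [one_smul]
  · rw [Units.smul_def]
    simp only [Units.val_neg, Units.val_one, neg_smul, one_smul]
    exact Rr_neg _

lemma wt_det_le {n : ℕ} (M : Matrix (Fin n) (Fin n) (Rr r))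
    (hM : ∀ i j, wt (M i j) ≤ 1) : wt (det M) ≤ Nat.factorial n := by
  rw [det_char2]
  refine le_trans (wt_sum_le _ _) ?_
  have : ∀ σ ∈ (Finset.univ : Finset (Equiv.Perm (Fin n))),
      wt (∏ i, M (σ i) i) ≤ 1 := fun σ _ => wt_prod_le_one _ _ (fun i _ => hM _ _)
  calc ∑ σ : Equiv.Perm (Fin n), wt (∏ i, M (σ i) i)
      ≤ ∑ _σ : Equiv.Perm (Fin n), 1 := Finset.sum_le_sum this
    _ = Nat.factorial n := by simp [Fintype.card_perm]


theorem card_perm_two {α : Type*} [DecidableEq α] [Fintype α] (j1 j2 k1 k2 : α)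
    (hj : j1 ≠ j2) (hk : k1 ≠ k2) :
    (Finset.univ.filter (fun σ : Equiv.Perm α => σ k1 = j1 ∧ σ k2 = j2)).card =
      Nat.factorial (Fintype.card α - 2) := by
  classical
  -- build τ with τ j1 = k1, τ j2 = k2
  obtain ⟨τ, hτ1, hτ2⟩ : ∃ τ : Equiv.Perm α, τ j1 = k1 ∧ τ j2 = k2 := by
    refine ⟨(Equiv.swap (Equiv.swap j1 k1 j2) k2) * Equiv.swap j1 k1, ?_, ?_⟩
    · simp only [Equiv.Perm.mul_apply, Equiv.swap_apply_left]
      have hne : k1 ≠ (Equiv.swap j1 k1) j2 := by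
        intro h
        have h2 : (Equiv.swap j1 k1) j2 = (Equiv.swap j1 k1) j1 := by
          rw [← h, Equiv.swap_apply_left]
        exact hj ((Equiv.swap j1 k1).injective h2).symm
      exact Equiv.swap_apply_of_ne_of_ne hne hk
    · simp only [Equiv.Perm.mul_apply]
      exact Equiv.swap_apply_left _ _
  have hbij : (Finset.univ.filter (fun σ : Equiv.Perm α => σ k1 = j1 ∧ σ k2 = j2)).card =
      (Finset.univ.filter (fun σ : Equiv.Perm α => σ k1 = k1 ∧ σ k2 = k2)).card := by
    refine Finset.card_bij' (fun σ _ => τ * σ) (fun σ _ => τ⁻¹ * σ) ?_ ?_ ?_ ?_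
    · intro σ hσ
      simp only [Finset.mem_filter, Finset.mem_univ, true_and] at hσ ⊢
      rw [Equiv.Perm.mul_apply, Equiv.Perm.mul_apply, hσ.1, hσ.2, hτ1, hτ2]
      exact ⟨rfl, rfl⟩
    · intro σ hσ
      simp only [Finset.mem_filter, Finset.mem_univ, true_and] at hσ ⊢
      rw [Equiv.Perm.mul_apply, Equiv.Perm.mul_apply, hσ.1, hσ.2]
      constructor
      · rw [← hτ1]; exact τ.symm_apply_apply j1
      · rw [← hτ2]; exact τ.symm_apply_apply j2
    · intro σ _; group
    · intro σ _; group
  rw [hbij]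
  rw [← Fintype.card_subtype]
  have e1 : {σ : Equiv.Perm α // σ k1 = k1 ∧ σ k2 = k2} ≃
      {σ : Equiv.Perm α // ∀ a, ¬(a ≠ k1 ∧ a ≠ k2) → σ a = a} := by
    refine Equiv.subtypeEquivRight fun σ => ?_
    constructor
    · rintro ⟨h1, h2⟩ a ha
      rcases not_and_or.mp ha with h | h <;> rw [not_not] at h <;> subst h <;> assumption
    · intro h
      exact ⟨h k1 (by simp), h k2 (by simp)⟩
  rw [Fintype.card_congr (e1.trans (Equiv.Perm.subtypeEquivSubtypePerm
    (fun a => a ≠ k1 ∧ a ≠ k2)).symm), Fintype.card_perm]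
  congr 1
  rw [Fintype.card_subtype]
  have : Finset.univ.filter (fun a : α => a ≠ k1 ∧ a ≠ k2) = Finset.univ \ {k1, k2} := by
    ext a; simp [not_or]
  rw [this, Finset.card_sdiff_of_subset (Finset.subset_univ _), Finset.card_univ,
    Finset.card_insert_of_notMem (by simp [hk]), Finset.card_singleton]


lemma wt_det_le_cycle {r n : ℕ} (M : Matrix (Fin n) (Fin n) (Rr r))
    (hM : ∀ i j, wt (M i j) ≤ 1) (j1 j2 k1 k2 : Fin n) (hj : j1 ≠ j2) (hk : k1 ≠ k2)
    (hc : M j1 k1 * M j2 k2 = M j1 k2 * M j2 k1) :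
    wt (det M) ≤ Nat.factorial n - 2 * Nat.factorial (n - 2) := by
  classical
  rw [det_char2]
  set P : Equiv.Perm (Fin n) → Prop :=
    fun σ => (σ k1 = j1 ∧ σ k2 = j2) ∨ (σ k1 = j2 ∧ σ k2 = j1) with hP
  have key : ∀ σ : Equiv.Perm (Fin n),
      ∏ i, M ((σ * Equiv.swap k1 k2) i) i
        = ∏ i, M (σ i) (Equiv.swap k1 k2 i) := by
    intro σ
    calc ∏ i, M ((σ * Equiv.swap k1 k2) i) i
        = ∏ i, (fun j => M (σ j) (Equiv.swap k1 k2 j)) (Equiv.swap k1 k2 i) := by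
          refine Finset.prod_congr rfl fun i _ => ?_
          simp only [Equiv.Perm.mul_apply, Equiv.swap_apply_self]
      _ = ∏ i, M (σ i) (Equiv.swap k1 k2 i) :=
          Equiv.prod_comp (Equiv.swap k1 k2) (fun j => M (σ j) (Equiv.swap k1 k2 j))
  have prodsplit : ∀ f : Fin n → Rr r,
      ∏ i, f i = f k1 * f k2 * ∏ i ∈ Finset.univ \ {k1, k2}, f i := by
    intro f
    rw [← Finset.prod_mul_prod_compl ({k1, k2} : Finset (Fin n)) f,
      Finset.prod_pair hk]
    congr 1
  have hzero : ∑ σ ∈ Finset.univ.filter P, ∏ i, M (σ i) i = 0 := by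
    refine Finset.sum_involution (fun σ _ => σ * Equiv.swap k1 k2) ?_ ?_ ?_ ?_
    · intro σ hσ
      have heq : ∏ i, M ((σ * Equiv.swap k1 k2) i) i = ∏ i, M (σ i) i := by
        rw [key]
        rw [prodsplit (fun i => M (σ i) (Equiv.swap k1 k2 i)),
          prodsplit (fun i => M (σ i) i)]
        have hrest : ∏ i ∈ Finset.univ \ {k1, k2}, M (σ i) (Equiv.swap k1 k2 i)
            = ∏ i ∈ Finset.univ \ {k1, k2}, M (σ i) i := by
          refine Finset.prod_congr rfl fun i hi => ?_
          simp only [Finset.mem_sdiff, Finset.mem_insert, Finset.mem_singleton, not_or] at hi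
          rw [Equiv.swap_apply_of_ne_of_ne hi.2.1 hi.2.2]
        rw [hrest, Equiv.swap_apply_left, Equiv.swap_apply_right]
        simp only [Finset.mem_filter, Finset.mem_univ, true_and, hP] at hσ
        rcases hσ with ⟨h1, h2⟩ | ⟨h1, h2⟩ <;> rw [h1, h2] <;> congr 1
        · exact hc.symm
        · rw [mul_comm, mul_comm (M j2 k1) (M j1 k2)]
          exact hc
      rw [heq]
      exact Rr_add_self _
    · intro σ hσ _
      intro hcontra
      have hcontra' : σ * Equiv.swap k1 k2 = σ := hcontra
      have : σ k2 = σ k1 := by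
        conv_lhs => rw [← Equiv.swap_apply_left k1 k2]
        rw [← Equiv.Perm.mul_apply, hcontra']
      exact hk (σ.injective this).symm
    · intro σ hσ
      simp only [Finset.mem_filter, Finset.mem_univ, true_and, hP] at hσ ⊢
      rcases hσ with ⟨h1, h2⟩ | ⟨h1, h2⟩
      · right
        constructor
        · rw [Equiv.Perm.mul_apply, Equiv.swap_apply_left, h2]
        · rw [Equiv.Perm.mul_apply, Equiv.swap_apply_right, h1]
      · left
        constructor
        · rw [Equiv.Perm.mul_apply, Equiv.swap_apply_left, h2]
        · rw [Equiv.Perm.mul_apply, Equiv.swap_apply_right, h1]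
    · intro σ _
      show σ * Equiv.swap k1 k2 * Equiv.swap k1 k2 = σ
      rw [mul_assoc, Equiv.swap_mul_self, mul_one]
  have hsplit : ∑ σ : Equiv.Perm (Fin n), ∏ i, M (σ i) i
      = ∑ σ ∈ Finset.univ.filter (fun σ => ¬ P σ), ∏ i, M (σ i) i := by
    rw [← Finset.sum_filter_add_sum_filter_not Finset.univ P, hzero, zero_add]
  rw [hsplit]
  refine le_trans (wt_sum_le _ _) ?_
  have hcard : (Finset.univ.filter (fun σ : Equiv.Perm (Fin n) => ¬ P σ)).card
      = Nat.factorial n - 2 * Nat.factorial (n - 2) := by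
    have h1 : (Finset.univ.filter P).card = 2 * Nat.factorial (n - 2) := by
      have hdisj : Disjoint
          (Finset.univ.filter (fun σ : Equiv.Perm (Fin n) => σ k1 = j1 ∧ σ k2 = j2))
          (Finset.univ.filter (fun σ : Equiv.Perm (Fin n) => σ k1 = j2 ∧ σ k2 = j1)) := by
        rw [Finset.disjoint_filter]
        rintro σ _ ⟨h1, _⟩ ⟨h2, _⟩
        exact hj (h1.symm.trans h2)
      have : Finset.univ.filter P =
          (Finset.univ.filter (fun σ : Equiv.Perm (Fin n) => σ k1 = j1 ∧ σ k2 = j2)) ∪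
          (Finset.univ.filter (fun σ : Equiv.Perm (Fin n) => σ k1 = j2 ∧ σ k2 = j1)) := by
        ext σ
        simp only [Finset.mem_filter, Finset.mem_union, Finset.mem_univ, true_and, hP]
      rw [this, Finset.card_union_of_disjoint hdisj,
        card_perm_two j1 j2 k1 k2 hj hk, card_perm_two j2 j1 k1 k2 hj.symm hk,
        Fintype.card_fin, two_mul]
    have h2 := Finset.card_filter_add_card_filter_not
      (s := (Finset.univ : Finset (Equiv.Perm (Fin n)))) P
    rw [Finset.card_univ, Fintype.card_perm, Fintype.card_fin] at h2
    omega
  calc ∑ σ ∈ Finset.univ.filter (fun σ => ¬ P σ), wt (∏ i, M (σ i) i)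
      ≤ ∑ _σ ∈ Finset.univ.filter (fun σ : Equiv.Perm (Fin n) => ¬ P σ), 1 :=
        Finset.sum_le_sum (fun σ _ => wt_prod_le_one _ _ (fun i _ => hM _ _))
    _ = _ := by rw [Finset.sum_const, smul_eq_mul, mul_one, hcard]


lemma emb_succAbove {α : Type*} [LinearOrder α] (s : Finset α) {n : ℕ} (h : s.card = n + 1)
    (p : Fin (n + 1)) (t : Finset α)
    (ht : ∀ x, x ∈ t ↔ x ≠ s.orderEmbOfFin h p ∧ x ∈ s) (ht' : t.card = n) :
    ⇑(s.orderEmbOfFin h) ∘ p.succAbove = ⇑(t.orderEmbOfFin ht') := by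
  apply Finset.orderEmbOfFin_unique ht'
  · intro q
    rw [ht]
    exact ⟨fun he => Fin.succAbove_ne p q ((s.orderEmbOfFin h).injective he),
      Finset.orderEmbOfFin_mem s h _⟩
  · exact (s.orderEmbOfFin h).strictMono.comp (Fin.strictMono_succAbove p)

lemma sum_emb {β : Type*} [AddCommMonoid β] {L n : ℕ} (B : Finset (Fin L)) (hB : B.card = n)
    (f : Fin L → β) (hf : ∀ i, i ∉ B → f i = 0) :
    ∑ i, f i = ∑ p : Fin n, f (B.orderEmbOfFin hB p) := by
  rw [← Finset.sum_subset (Finset.subset_univ B) (fun i _ hi => hf i hi)]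
  have hBm : B = Finset.univ.map ⟨⇑(B.orderEmbOfFin hB), (B.orderEmbOfFin hB).injective⟩ := by
    ext x
    simp only [Finset.mem_map, Finset.mem_univ, true_and, Function.Embedding.coeFn_mk]
    constructor
    · intro hx
      have : x ∈ Set.range ⇑(B.orderEmbOfFin hB) := by
        rw [Finset.range_orderEmbOfFin]; exact hx
      exact this
    · rintro ⟨p, rfl⟩
      exact Finset.orderEmbOfFin_mem B hB p
  conv_lhs => rw [hBm]
  rw [Finset.sum_map]
  rfl

def cvec {r J L : ℕ} (H : Matrix (Fin J) (Fin L) (Rr r)) {n : ℕ}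
    (A : Finset (Fin J)) (B : Finset (Fin L)) (hA : A.card = n) (hB : B.card = n + 1) :
    Fin L → Rr r :=
  fun i => if h : i ∈ B then
    det (H.submatrix (A.orderEmbOfFin hA)
      (⇑(B.orderEmbOfFin hB) ∘ Fin.succAbove ((B.orderIsoOfFin hB).symm ⟨i, h⟩)))
  else 0

lemma cvec_not_mem {r J L : ℕ} (H : Matrix (Fin J) (Fin L) (Rr r)) {n : ℕ}
    (A : Finset (Fin J)) (B : Finset (Fin L)) (hA : A.card = n) (hB : B.card = n + 1)
    {i : Fin L} (hi : i ∉ B) : cvec H A B hA hB i = 0 := by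
  rw [cvec, dif_neg hi]

lemma cvec_emb_apply {r J L : ℕ} (H : Matrix (Fin J) (Fin L) (Rr r)) {n : ℕ}
    (A : Finset (Fin J)) (B : Finset (Fin L)) (hA : A.card = n) (hB : B.card = n + 1)
    (p : Fin (n + 1)) :
    cvec H A B hA hB (B.orderEmbOfFin hB p) =
      det (H.submatrix (A.orderEmbOfFin hA) (⇑(B.orderEmbOfFin hB) ∘ p.succAbove)) := by
  have hmem : B.orderEmbOfFin hB p ∈ B := Finset.orderEmbOfFin_mem B hB p
  rw [cvec, dif_pos hmem]
  have hp : (B.orderIsoOfFin hB).symm ⟨B.orderEmbOfFin hB p, hmem⟩ = p := by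
    rw [OrderIso.symm_apply_eq]
    exact Subtype.ext (Finset.coe_orderIsoOfFin_apply B hB p).symm
  rw [hp]

lemma cvec_isCodeword {r J L n : ℕ} (H : Matrix (Fin J) (Fin L) (Rr r))
    (A : Finset (Fin J)) (B : Finset (Fin L)) (hA : A.card = n) (hB : B.card = n + 1)
    (hmax : ∀ j, (hj : j ∉ A) → det (H.submatrix ((insert j A).orderEmbOfFin
        (by rw [Finset.card_insert_of_notMem hj, hA])) (⇑(B.orderEmbOfFin hB))) = 0) :
    isCodeword H (cvec H A B hA hB) := by
  classical
  intro j
  have hstep : ∑ i, H j i * cvec H A B hA hB i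
      = ∑ p : Fin (n + 1), H j (B.orderEmbOfFin hB p) * cvec H A B hA hB (B.orderEmbOfFin hB p) :=
    sum_emb B hB _ (fun i hi => by rw [cvec_not_mem H A B hA hB hi, mul_zero])
  rw [hstep]
  set e := B.orderEmbOfFin hB with he
  set a := A.orderEmbOfFin hA with ha
  set N : Matrix (Fin (n + 1)) (Fin (n + 1)) (Rr r) :=
    Matrix.of (Fin.cons (fun q => H j (e q)) (fun k q => H (a k) (e q))) with hNdef
  have hN0 : ∀ q, N 0 q = H j (e q) := fun q => by simp [hNdef]
  have hNs : ∀ (k : Fin n) q, N k.succ q = H (a k) (e q) := fun k q => by simp [hNdef]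
  have hexp : det N = ∑ p : Fin (n + 1), H j (e p) * cvec H A B hA hB (e p) := by
    rw [Matrix.det_succ_row_zero]
    refine Finset.sum_congr rfl fun p _ => ?_
    rw [cvec_emb_apply]
    have hneg : ((-1 : Rr r)) = 1 := Rr_neg 1
    rw [hneg, one_pow, one_mul, hN0]
    congr 1
  have hdet0 : det N = 0 := by
    by_cases hjA : j ∈ A
    · have hk0 : a ((A.orderIsoOfFin hA).symm ⟨j, hjA⟩) = j := by
        rw [ha, ← Finset.coe_orderIsoOfFin_apply A hA, OrderIso.apply_symm_apply]
      refine Matrix.det_zero_of_row_eq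
        (Fin.succ_ne_zero ((A.orderIsoOfFin hA).symm ⟨j, hjA⟩)).symm ?_
      ext q
      rw [hN0, hNs, hk0]
    · have hins : (insert j A).card = n + 1 := by rw [Finset.card_insert_of_notMem hjA, hA]
      set g := (insert j A).orderEmbOfFin hins with hg
      set rowfun : Fin (n + 1) → Fin J := Fin.cons j (fun k => a k) with hrowfun
      have hrmem : ∀ p, rowfun p ∈ insert j A := by
        intro p
        refine Fin.cases ?_ ?_ p
        · rw [hrowfun, Fin.cons_zero]; exact Finset.mem_insert_self j A
        · intro k
          rw [hrowfun, Fin.cons_succ]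
          exact Finset.mem_insert_of_mem (Finset.orderEmbOfFin_mem A hA k)
      have hrinj : Function.Injective rowfun := by
        intro p q hpq
        induction p using Fin.cases with
        | zero =>
          induction q using Fin.cases with
          | zero => rfl
          | succ m =>
            exfalso
            rw [hrowfun] at hpq
            simp only [Fin.cons_zero, Fin.cons_succ] at hpq
            exact hjA (by rw [hpq]; exact Finset.orderEmbOfFin_mem A hA m)
        | succ k =>
          induction q using Fin.cases with
          | zero =>
            exfalso
            rw [hrowfun] at hpq
            simp only [Fin.cons_zero, Fin.cons_succ] at hpq
            exact hjA (hpq ▸ Finset.orderEmbOfFin_mem A hA k)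
          | succ m =>
            rw [hrowfun] at hpq
            simp only [Fin.cons_succ] at hpq
            exact congrArg Fin.succ ((A.orderEmbOfFin hA).injective hpq)
      set σfun : Fin (n + 1) → Fin (n + 1) :=
        fun p => ((insert j A).orderIsoOfFin hins).symm ⟨rowfun p, hrmem p⟩ with hσfun
      have hσinj : Function.Injective σfun := by
        intro p q hpq
        rw [hσfun] at hpq
        have := ((insert j A).orderIsoOfFin hins).symm.injective hpq
        exact hrinj (congrArg Subtype.val this)
      set σ : Equiv.Perm (Fin (n + 1)) :=
        Equiv.ofBijective σfun (Finite.injective_iff_bijective.mp hσinj) with hσ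
      have hgσ : ∀ p, g (σ p) = rowfun p := by
        intro p
        have h1 : ((insert j A).orderIsoOfFin hins (σfun p) : Fin J) = rowfun p := by
          rw [hσfun, OrderIso.apply_symm_apply]
        rw [← h1, hg, Finset.coe_orderIsoOfFin_apply]
        rfl
      have hNeq : N = (H.submatrix (⇑g) (⇑e)).submatrix σ id := by
        refine Matrix.ext fun p q => ?_
        show N p q = H (g (σ p)) (e q)
        rw [hgσ]
        induction p using Fin.cases with
        | zero =>
          rw [hN0, hrowfun, Fin.cons_zero]
        | succ k =>
          rw [hNs, hrowfun, Fin.cons_succ]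
      have hz : det (H.submatrix (⇑g) (⇑e)) = 0 := hmax j hjA
      rw [hNeq, Matrix.det_permute, hz, mul_zero]
  rw [← hexp, hdet0]


lemma emb_congr {α : Type*} [LinearOrder α] {s t : Finset α} (hst : s = t) {n : ℕ}
    (hs : s.card = n) (ht : t.card = n) :
    ⇑(s.orderEmbOfFin hs) = ⇑(t.orderEmbOfFin ht) := by subst hst; rfl

lemma cvec_wH {r J L n : ℕ} (H : Matrix (Fin J) (Fin L) (Rr r))
    (A : Finset (Fin J)) (B : Finset (Fin L)) (hA : A.card = n) (hB : B.card = n + 1) :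
    wH (cvec H A B hA hB) = ∑ p : Fin (n + 1),
      wt (det (H.submatrix (⇑(A.orderEmbOfFin hA)) (⇑(B.orderEmbOfFin hB) ∘ p.succAbove))) := by
  rw [wH, sum_emb B hB (fun i => wt (cvec H A B hA hB i))
    (fun i hi => by
      show wt (cvec H A B hA hB i) = 0
      rw [cvec_not_mem H A B hA hB hi, wt_zero])]
  exact Finset.sum_congr rfl fun p _ => by rw [cvec_emb_apply]

lemma cvec_apply_mem {r J L n : ℕ} (H : Matrix (Fin J) (Fin L) (Rr r))
    (A : Finset (Fin J)) (B : Finset (Fin L)) (hA : A.card = n) (hB : B.card = n + 1)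
    {i : Fin L} (hi : i ∈ B) (h' : (B.erase i).card = n) :
    cvec H A B hA hB i =
      det (H.submatrix (⇑(A.orderEmbOfFin hA)) (⇑((B.erase i).orderEmbOfFin h'))) := by
  have hei : B.orderEmbOfFin hB ((B.orderIsoOfFin hB).symm ⟨i, hi⟩) = i := by
    rw [← Finset.coe_orderIsoOfFin_apply, OrderIso.apply_symm_apply]
  conv_lhs => rw [show i = B.orderEmbOfFin hB ((B.orderIsoOfFin hB).symm ⟨i, hi⟩) from hei.symm]
  rw [cvec_emb_apply]
  congr 1
  exact congrArg (fun f => H.submatrix (⇑(A.orderEmbOfFin hA)) f)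
    (emb_succAbove B hB ((B.orderIsoOfFin hB).symm ⟨i, hi⟩) (B.erase i)
      (fun x => by rw [Finset.mem_erase, hei]) h')

lemma arith1 (J : ℕ) (hJ : 2 ≤ J) :
    Nat.factorial J ≤ Nat.factorial (J + 1) - 2 * Nat.factorial (J - 1) := by
  obtain ⟨m, rfl⟩ : ∃ m, J = m + 2 := ⟨J - 2, by omega⟩
  have h1 : m + 2 - 1 = m + 1 := by omega
  have h2 : m + 2 + 1 = m + 3 := by omega
  rw [h1, h2]
  apply Nat.le_sub_of_add_le
  have e1 : Nat.factorial (m + 2) = (m + 2) * ((m + 1) * Nat.factorial m) := by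
    rw [Nat.factorial_succ, Nat.factorial_succ]
  have e2 : Nat.factorial (m + 3) = (m + 3) * ((m + 2) * ((m + 1) * Nat.factorial m)) := by
    rw [Nat.factorial_succ, Nat.factorial_succ, Nat.factorial_succ]
  have e3 : Nat.factorial (m + 1) = (m + 1) * Nat.factorial m := by
    rw [Nat.factorial_succ]
  rw [e1, e2, e3]
  set a := Nat.factorial m
  nlinarith [Nat.factorial_pos m]

lemma arith2 (J : ℕ) (hJ : 2 ≤ J) :
    2 * Nat.factorial J + (J - 1) * (Nat.factorial J - 2 * Nat.factorial (J - 2)) ≤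
      Nat.factorial (J + 1) - 2 * Nat.factorial (J - 1) := by
  obtain ⟨m, rfl⟩ : ∃ m, J = m + 2 := ⟨J - 2, by omega⟩
  have h1 : m + 2 - 1 = m + 1 := by omega
  have h2 : m + 2 + 1 = m + 3 := by omega
  have h3 : m + 2 - 2 = m := by omega
  rw [h1, h2, h3]
  apply Nat.le_sub_of_add_le
  have e1 : Nat.factorial (m + 2) = ((m + 2) * (m + 1)) * Nat.factorial m := by
    rw [Nat.factorial_succ, Nat.factorial_succ]; ring
  have e2 : Nat.factorial (m + 3) = ((m + 3) * ((m + 2) * (m + 1))) * Nat.factorial m := by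
    rw [Nat.factorial_succ, Nat.factorial_succ, Nat.factorial_succ]; ring
  have e3 : Nat.factorial (m + 1) = (m + 1) * Nat.factorial m := by
    rw [Nat.factorial_succ]
  rw [e1, e2, e3]
  set a := Nat.factorial m with ha
  have hsub : (m + 2) * (m + 1) * a - 2 * a = (m * m + 3 * m) * a := by
    rw [← Nat.sub_mul]
    congr 1
    have : (m + 2) * (m + 1) = m * m + 3 * m + 2 := by ring
    omega
  rw [hsub]
  exact Nat.le_of_eq (by ring)

end QCAux

/-- a 4-cycle in the Tanner graph of a type-I code lowers the bound. -/
theorem typeI_four_cycle_dmin {r J L : ℕ} (hr : 0 < r) (hJ : 2 ≤ J) (hJL : J + 1 ≤ L)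
    (H : Matrix (Fin J) (Fin L) (Rr r))
    (htypeI : ∀ j i, H j i = 0 ∨ ∃ a, H j i = mono a)
    (j1 j2 : Fin J) (i1 i2 : Fin L) (hj : j1 ≠ j2) (hi : i1 ≠ i2)
    (hm11 : ∃ a, H j1 i1 = mono a) (hm12 : ∃ a, H j1 i2 = mono a)
    (hm21 : ∃ a, H j2 i1 = mono a) (hm22 : ∃ a, H j2 i2 = mono a)
    (hcyc : H j1 i1 * H j2 i2 = H j1 i2 * H j2 i1) :
    dmin H ≤ Nat.factorial (J + 1) - 2 * Nat.factorial (J - 1) := by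
  open QCAux in
  classical
  set bnd := Nat.factorial (J + 1) - 2 * Nat.factorial (J - 1) with hbnd
  have hwt : ∀ j i, wt (H j i) ≤ 1 := by
    intro j i
    rcases htypeI j i with h | ⟨a, h⟩ <;> rw [h]
    · rw [wt_zero]; omega
    · rw [wt_mono]
  have hdle : ∀ c : Fin L → Rr r, isCodeword H c → c ≠ 0 → wH c ≤ bnd → dmin H ≤ bnd :=
    fun c h1 h2 h3 => le_trans (Nat.sInf_le ⟨c, h1, h2, rfl⟩) h3
  -- choose S
  obtain ⟨S, hSsub, hScard⟩ : ∃ S : Finset (Fin L), {i1, i2} ⊆ S ∧ S.card = J + 1 := by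
    apply Finset.exists_superset_card_eq
    · rw [Finset.card_insert_of_notMem (by simpa using hi), Finset.card_singleton]; omega
    · simpa using hJL
  have hi1S : i1 ∈ S := hSsub (by simp)
  have hi2S : i2 ∈ S := hSsub (by simp)
  have hA0 : (Finset.univ : Finset (Fin J)).card = J := by simp
  set c₀ := cvec H Finset.univ S hA0 hScard with hc₀
  by_cases hc0 : c₀ = 0
  · -- degenerate case: all top minors vanish
    set Ts : Set ℕ := {t | ∃ A : Finset (Fin J), ∃ B : Finset (Fin L), B ⊆ S ∧
      ∃ hA : A.card = t, ∃ hB : B.card = t,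
        det (H.submatrix (⇑(A.orderEmbOfFin hA)) (⇑(B.orderEmbOfFin hB))) ≠ 0} with hTs
    have hone : (1 : Rr r) ≠ 0 := by
      intro h
      have h2 := congrArg (fun p : Rr r => p.coeff 0) h
      rw [AddMonoidAlgebra.one_def] at h2
      simp only [AddMonoidAlgebra.coeff_single, AddMonoidAlgebra.coeff_zero, Finsupp.coe_zero,
        Pi.zero_apply, Finsupp.single_eq_same] at h2
      exact one_ne_zero h2
    have h0T : (0 : ℕ) ∈ Ts := by
      refine ⟨∅, ∅, Finset.empty_subset S, Finset.card_empty, Finset.card_empty, ?_⟩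
      rw [Matrix.det_fin_zero]
      exact hone
    have hbddT : ∀ t ∈ Ts, t ≤ J := by
      rintro t ⟨A, B, hBS, hA, hB, hne⟩
      rw [← hA]
      exact le_trans (Finset.card_le_univ A) (by simp)
    have hbdd : BddAbove Ts := ⟨J, hbddT⟩
    obtain ⟨t, htmem, htmax⟩ : ∃ t, t ∈ Ts ∧ ∀ t' ∈ Ts, t' ≤ t :=
      ⟨sSup Ts, Nat.sSup_mem ⟨0, h0T⟩ hbdd, fun t' ht' => le_csSup hbdd ht'⟩
    obtain ⟨A, B, hBS, hA, hB2, hdet⟩ := htmem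
    have htJ : t ≠ J := by
      intro hteq
      subst hteq
      have hAu : A = Finset.univ := Finset.eq_univ_of_card A (by rw [hA]; simp)
      have hBcard : B.card < S.card := by rw [hB2, hScard]; omega
      have hBne : B ≠ S := fun h => by rw [h] at hBcard; omega
      obtain ⟨i0, hi0S, hi0B⟩ := Finset.exists_of_ssubset (lt_of_le_of_ne hBS hBne)
      have hBeq : B = S.erase i0 := by
        apply Finset.eq_of_subset_of_card_le
        · intro x hx
          exact Finset.mem_erase.mpr ⟨fun h => hi0B (h ▸ hx), hBS hx⟩
        · rw [Finset.card_erase_of_mem hi0S, hScard, hB2]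
          omega
      subst hAu
      subst hBeq
      apply hdet
      have hz : cvec H Finset.univ S hA0 hScard i0 = 0 := by rw [← hc₀, hc0]; rfl
      have := cvec_apply_mem H Finset.univ S hA0 hScard hi0S
        (by rw [Finset.card_erase_of_mem hi0S, hScard]; rfl)
      rw [hz] at this
      exact this.symm
    have htlt : t + 1 ≤ J := by
      have := hbddT t ⟨A, B, hBS, hA, hB2, hdet⟩
      omega
    have hBcard : B.card < S.card := by rw [hB2, hScard]; omega
    have hBne : B ≠ S := fun h => by rw [h] at hBcard; omega
    obtain ⟨i0, hi0S, hi0B⟩ := Finset.exists_of_ssubset (lt_of_le_of_ne hBS hBne)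
    set B' := insert i0 B with hB'def
    have hB' : B'.card = t + 1 := by rw [hB'def, Finset.card_insert_of_notMem hi0B, hB2]
    have hB'S : B' ⊆ S := Finset.insert_subset hi0S hBS
    set c := cvec H A B' hA hB' with hcdef
    have hcw : isCodeword H c := by
      apply cvec_isCodeword
      intro j hjA
      by_contra hne
      have : t + 1 ∈ Ts :=
        ⟨insert j A, B', hB'S, by rw [Finset.card_insert_of_notMem hjA, hA], hB', hne⟩
      have := htmax _ this
      omega
    have hcne : c ≠ 0 := by
      intro h
      apply hdet
      have hz : cvec H A B' hA hB' i0 = 0 := by rw [← hcdef, h]; rfl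
      have hmem : i0 ∈ B' := Finset.mem_insert_self i0 B
      have herase : (B'.erase i0).card = t := by
        rw [hB'def, Finset.erase_insert hi0B, hB2]
      have happ := cvec_apply_mem H A B' hA hB' hmem herase
      rw [hz] at happ
      rw [← emb_congr (show B'.erase i0 = B by rw [hB'def, Finset.erase_insert hi0B]) herase hB2]
      exact happ.symm
    apply hdle c hcw hcne
    have hwc : wH c ≤ (t + 1) * Nat.factorial t := by
      rw [hcdef, cvec_wH]
      calc ∑ p : Fin (t + 1), wt (det (H.submatrix (⇑(A.orderEmbOfFin hA))
            (⇑(B'.orderEmbOfFin hB') ∘ p.succAbove)))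
          ≤ ∑ _p : Fin (t + 1), Nat.factorial t :=
            Finset.sum_le_sum (fun p _ => wt_det_le _ (fun u v => hwt _ _))
        _ = (t + 1) * Nat.factorial t := by
            rw [Finset.sum_const, Finset.card_univ, Fintype.card_fin, smul_eq_mul]
    refine le_trans hwc ?_
    refine le_trans ?_ (arith1 J hJ)
    have : (t + 1) * Nat.factorial t = Nat.factorial (t + 1) := (Nat.factorial_succ t).symm
    rw [this]
    exact Nat.factorial_le htlt
  · -- main case: cofactor vector works
    have hcw : isCodeword H c₀ := by
      apply cvec_isCodeword
      intro j hjA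
      exact absurd (Finset.mem_univ j) hjA
    apply hdle c₀ hcw hc0
    set e := S.orderEmbOfFin hScard with he
    set p1 := (S.orderIsoOfFin hScard).symm ⟨i1, hi1S⟩ with hp1def
    set p2 := (S.orderIsoOfFin hScard).symm ⟨i2, hi2S⟩ with hp2def
    have hp1 : e p1 = i1 := by
      rw [he, hp1def, ← Finset.coe_orderIsoOfFin_apply, OrderIso.apply_symm_apply]
    have hp2 : e p2 = i2 := by
      rw [he, hp2def, ← Finset.coe_orderIsoOfFin_apply, OrderIso.apply_symm_apply]
    have hp12 : p1 ≠ p2 := fun h => hi (by rw [← hp1, ← hp2, h])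
    set D : Fin (J + 1) → ℕ := fun p =>
      wt (det (H.submatrix (⇑(Finset.univ.orderEmbOfFin hA0)) (⇑e ∘ p.succAbove))) with hD
    have hwH : wH c₀ = ∑ p : Fin (J + 1), D p := cvec_wH H Finset.univ S hA0 hScard
    have hDle : ∀ p, D p ≤ Nat.factorial J :=
      fun p => wt_det_le _ (fun u v => hwt _ _)
    have hDlt : ∀ p, p ≠ p1 → p ≠ p2 →
        D p ≤ Nat.factorial J - 2 * Nat.factorial (J - 2) := by
      intro p hne1 hne2
      have hep1 : e p ≠ i1 := fun h => hne1 (by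
        rw [← hp1] at h
        exact e.injective h)
      have hep2 : e p ≠ i2 := fun h => hne2 (by
        rw [← hp2] at h
        exact e.injective h)
      obtain ⟨w1, hw1⟩ : ∃ w, e w = i1 := by
        have : i1 ∈ Set.range ⇑e := by rw [he, Finset.range_orderEmbOfFin]; exact hi1S
        exact this
      obtain ⟨w2, hw2⟩ : ∃ w, e w = i2 := by
        have : i2 ∈ Set.range ⇑e := by rw [he, Finset.range_orderEmbOfFin]; exact hi2S
        exact this
      have hw1p : w1 ≠ p := fun h => hep1 (h ▸ hw1)
      have hw2p : w2 ≠ p := fun h => hep2 (h ▸ hw2)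
      obtain ⟨q1, hq1⟩ := Fin.exists_succAbove_eq hw1p
      obtain ⟨q2, hq2⟩ := Fin.exists_succAbove_eq hw2p
      have hq1e : (⇑e ∘ p.succAbove) q1 = i1 := by rw [Function.comp_apply, hq1, hw1]
      have hq2e : (⇑e ∘ p.succAbove) q2 = i2 := by rw [Function.comp_apply, hq2, hw2]
      have hq12 : q1 ≠ q2 := fun h => hi (by rw [← hq1e, ← hq2e, h])
      have hid : ⇑(Finset.univ.orderEmbOfFin hA0) = fun x : Fin J => x :=
        (Finset.orderEmbOfFin_unique hA0 (fun x => Finset.mem_univ x) strictMono_id).symm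
      rw [hD]
      simp only [hid]
      apply wt_det_le_cycle _ (fun u v => hwt _ _) j1 j2 q1 q2 hj hq12
      show H j1 ((⇑e ∘ p.succAbove) q1) * H j2 ((⇑e ∘ p.succAbove) q2)
          = H j1 ((⇑e ∘ p.succAbove) q2) * H j2 ((⇑e ∘ p.succAbove) q1)
      rw [hq1e, hq2e]
      exact hcyc
    rw [hwH]
    have hsplit : ∑ p : Fin (J + 1), D p =
        ∑ p ∈ Finset.univ \ {p1, p2}, D p + ∑ p ∈ ({p1, p2} : Finset (Fin (J + 1))), D p :=
      (Finset.sum_sdiff (Finset.subset_univ _)).symm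
    rw [hsplit]
    have hcard2 : ({p1, p2} : Finset (Fin (J + 1))).card = 2 := by
      rw [Finset.card_insert_of_notMem (by simpa using hp12), Finset.card_singleton]
    have h1 : ∑ p ∈ ({p1, p2} : Finset (Fin (J + 1))), D p ≤ 2 * Nat.factorial J := by
      calc ∑ p ∈ ({p1, p2} : Finset (Fin (J + 1))), D p
          ≤ ∑ _p ∈ ({p1, p2} : Finset (Fin (J + 1))), Nat.factorial J :=
            Finset.sum_le_sum (fun p _ => hDle p)
        _ = 2 * Nat.factorial J := by rw [Finset.sum_const, hcard2, smul_eq_mul]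
    have h2 : ∑ p ∈ Finset.univ \ {p1, p2}, D p ≤
        (J - 1) * (Nat.factorial J - 2 * Nat.factorial (J - 2)) := by
      have hcardr : (Finset.univ \ ({p1, p2} : Finset (Fin (J + 1)))).card = J - 1 := by
        rw [Finset.card_sdiff_of_subset (Finset.subset_univ _), Finset.card_univ, Fintype.card_fin, hcard2]
        omega
      calc ∑ p ∈ Finset.univ \ {p1, p2}, D p
          ≤ ∑ _p ∈ Finset.univ \ ({p1, p2} : Finset (Fin (J + 1))),
              (Nat.factorial J - 2 * Nat.factorial (J - 2)) := by
            refine Finset.sum_le_sum (fun p hp => ?_)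
            rw [Finset.mem_sdiff, Finset.mem_insert, Finset.mem_singleton] at hp
            push_neg at hp
            exact hDlt p hp.2.1 hp.2.2
        _ = (J - 1) * (Nat.factorial J - 2 * Nat.factorial (J - 2)) := by
            rw [Finset.sum_const, hcardr, smul_eq_mul]
    calc ∑ p ∈ Finset.univ \ {p1, p2}, D p + ∑ p ∈ ({p1, p2} : Finset (Fin (J + 1))), D p
        ≤ (J - 1) * (Nat.factorial J - 2 * Nat.factorial (J - 2)) + 2 * Nat.factorial J :=
          Nat.add_le_add h2 h1
      _ ≤ bnd := by rw [hbnd, Nat.add_comm]; exact arith2 J hJ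
end
end
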